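/- Let f be the Fibonacci sequence with f_0 = f_1 = 1, and let (p_k) be bounded strictly positive. The space c_0(F̂,p), equipped with the paranorm g(x) = sup_k |(F̂x)_k|^{p_k/M} (M = max{1, sup p_k}), is complete: every Cauchy sequence in (c_0(F̂,p), d) with d(x,z) = g(x−z) converges to an element of c_0(F̂,p). -/

import Mathlib

open Filter Topology

def fibo : ℕ → ℕ
  | 0 => 1
  | 1 => 1
  | n + 2 => fibo (n + 1) + fibo n

noncomputable def Fhat (x : ℕ → ℝ) : ℕ → ℝ
  | 0 => (fibo 0 : ℝ) / fibo 1 * x 0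
  | k + 1 => (fibo (k + 1) : ℝ) / fibo (k + 2) * x (k + 1)
      - (fibo (k + 2) : ℝ) / fibo (k + 1) * x k

noncomputable def xseq (y : ℕ → ℝ) (k : ℕ) : ℝ :=
  ∑ j ∈ Finset.range (k + 1), ((fibo (k + 1) : ℝ) ^ 2 / ((fibo j : ℝ) * fibo (j + 1))) * y j

lemma fibo_pos : ∀ n, 0 < fibo n
  | 0 => Nat.one_pos
  | 1 => Nat.one_pos
  | n + 2 => Nat.add_pos_left (fibo_pos (n+1)) _

lemma fibo_ne (n : ℕ) : (fibo n : ℝ) ≠ 0 := by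
  exact_mod_cast (fibo_pos n).ne'

lemma Fhat_sub (x z : ℕ → ℝ) (k : ℕ) : Fhat (x - z) k = Fhat x k - Fhat z k := by
  cases k with
  | zero => simp [Fhat]; ring
  | succ k => simp [Fhat]; ring

lemma Fhat_xseq (y : ℕ → ℝ) (k : ℕ) : Fhat (xseq y) k = y k := by
  cases k with
  | zero => simp [Fhat, xseq, fibo]
  | succ k =>
    have h1 := fibo_ne (k+1)
    have h2 := fibo_ne (k+2)
    show (fibo (k + 1) : ℝ) / fibo (k + 2) * xseq y (k + 1)
      - (fibo (k + 2) : ℝ) / fibo (k + 1) * xseq y k = y (k+1)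
    rw [xseq, xseq, Finset.sum_range_succ (n := k+1), mul_add, Finset.mul_sum, Finset.mul_sum,
      add_sub_right_comm, ← Finset.sum_sub_distrib]
    simp only [show k+1+1 = k+2 from rfl]
    have hz : ∀ j ∈ Finset.range (k+1),
        (fibo (k + 1) : ℝ) / fibo (k + 2) * ((fibo (k + 2) : ℝ) ^ 2 / ((fibo j : ℝ) * fibo (j + 1)) * y j)
        - (fibo (k + 2) : ℝ) / fibo (k + 1) * ((fibo (k + 1) : ℝ) ^ 2 / ((fibo j : ℝ) * fibo (j + 1)) * y j) = 0 := by
      intro j _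
      have h3 := fibo_ne j
      have h4 := fibo_ne (j+1)
      field_simp
      ring
    rw [Finset.sum_eq_zero hz, zero_add]
    field_simp

lemma real_rpow_add_le {a b t : ℝ} (ha : 0 ≤ a) (hb : 0 ≤ b) (ht : 0 ≤ t) (ht1 : t ≤ 1) :
    (a + b) ^ t ≤ a ^ t + b ^ t := by
  have h := NNReal.rpow_add_le_add_rpow a.toNNReal b.toNNReal ht ht1
  rw [← Real.coe_toNNReal a ha, ← Real.coe_toNNReal b hb]
  exact_mod_cast h

theorem c0_Fhat_complete (p : ℕ → ℝ) (H : ℝ) (hp : ∀ k, 0 < p k) (hH : ∀ k, p k ≤ H)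
    (M : ℝ) (hM : M = max 1 H)
    (g : (ℕ → ℝ) → ℝ) (hg : ∀ x, g x = ⨆ k, |Fhat x k| ^ (p k / M))
    (S : Set (ℕ → ℝ))
    (hS : S = {x | Tendsto (fun n => |Fhat x n| ^ p n) atTop (𝓝 0)})
    (u : ℕ → (ℕ → ℝ)) (hu : ∀ i, u i ∈ S)
    (hcauchy : ∀ ε > 0, ∃ N, ∀ i ≥ N, ∀ j ≥ N, g (u i - u j) < ε) :
    ∃ x ∈ S, Tendsto (fun i => g (u i - x)) atTop (𝓝 0) := by
  have hM1 : 1 ≤ M := hM ▸ le_max_left 1 H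
  have hMpos : 0 < M := lt_of_lt_of_le one_pos hM1
  have hpleM : ∀ k, p k ≤ M := fun k => (hH k).trans (hM ▸ le_max_right 1 H)
  have hpM : ∀ k, 0 < p k / M := fun k => div_pos (hp k) hMpos
  have hpM1 : ∀ k, p k / M ≤ 1 := fun k => (div_le_one hMpos).mpr (hpleM k)
  -- Step A : for each i, |Fhat (u i) k| ^ (p k / M) → 0 as k → ∞
  have stepA : ∀ i, Tendsto (fun k => |Fhat (u i) k| ^ (p k / M)) atTop (𝓝 0) := by
    intro i
    have h0 : Tendsto (fun k => |Fhat (u i) k| ^ p k) atTop (𝓝 0) := by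
      have := hu i; rw [hS] at this; exact this
    have hcont : Tendsto (fun t : ℝ => t ^ (1/M)) (𝓝 0) (𝓝 0) := by
      have h := (Real.continuousAt_rpow_const 0 (1/M) (Or.inr (by positivity))).tendsto
      simpa [one_div, Real.zero_rpow (show M⁻¹ ≠ 0 by positivity)] using h
    refine (hcont.comp h0).congr fun k => ?_
    simp only [Function.comp]
    rw [← Real.rpow_mul (abs_nonneg _), mul_one_div]
  -- difference sequences also tend to zero along k
  have stepDiff : ∀ i j, Tendsto (fun k => |Fhat (u i - u j) k| ^ (p k / M)) atTop (𝓝 0) := by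
    intro i j
    have hle : ∀ k, |Fhat (u i - u j) k| ^ (p k / M)
        ≤ |Fhat (u i) k| ^ (p k / M) + |Fhat (u j) k| ^ (p k / M) := by
      intro k
      rw [Fhat_sub]
      calc |Fhat (u i) k - Fhat (u j) k| ^ (p k / M)
          ≤ (|Fhat (u i) k| + |Fhat (u j) k|) ^ (p k / M) :=
            Real.rpow_le_rpow (abs_nonneg _) (abs_sub _ _) (hpM k).le
        _ ≤ _ := real_rpow_add_le (abs_nonneg _) (abs_nonneg _) (hpM k).le (hpM1 k)
    exact squeeze_zero (fun k => Real.rpow_nonneg (abs_nonneg _) _) hle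
      (by simpa using (stepA i).add (stepA j))
  have hbdd : ∀ i j, BddAbove (Set.range fun k => |Fhat (u i - u j) k| ^ (p k / M)) :=
    fun i j => (stepDiff i j).bddAbove_range
  -- pointwise bound by g
  have hpt : ∀ i j k, |Fhat (u i) k - Fhat (u j) k| ^ (p k / M) ≤ g (u i - u j) := by
    intro i j k
    rw [hg]
    have h := le_ciSup (hbdd i j) k
    simpa [Fhat_sub] using h
  -- pointwise Cauchy, hence pointwise limits
  have hcau : ∀ k, ∃ l, Tendsto (fun i => Fhat (u i) k) atTop (𝓝 l) := by
    intro k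
    apply cauchySeq_tendsto_of_complete
    rw [Metric.cauchySeq_iff]
    intro ε hε
    have hε₁pos : 0 < min ε 1 := lt_min hε one_pos
    obtain ⟨N, hN⟩ := hcauchy ((min ε 1) ^ (p k / M)) (Real.rpow_pos_of_pos hε₁pos _)
    refine ⟨N, fun i hi j hj => ?_⟩
    have h1 : |Fhat (u i) k - Fhat (u j) k| ^ (p k / M) < (min ε 1) ^ (p k / M) :=
      lt_of_le_of_lt (hpt i j k) (hN i hi j hj)
    have h2 : |Fhat (u i) k - Fhat (u j) k| < min ε 1 := by
      by_contra hcon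
      push_neg at hcon
      exact absurd (Real.rpow_le_rpow hε₁pos.le hcon (hpM k).le) (not_le.mpr h1)
    calc dist (Fhat (u i) k) (Fhat (u j) k) = |Fhat (u i) k - Fhat (u j) k| := Real.dist_eq _ _
      _ < min ε 1 := h2
      _ ≤ ε := min_le_left _ _
  choose y hy using hcau
  -- Step D : uniform estimate
  have stepD : ∀ ε > (0:ℝ), ∃ N, ∀ i ≥ N, ∀ k, |Fhat (u i) k - y k| ^ (p k / M) ≤ ε := by
    intro ε hε
    obtain ⟨N, hN⟩ := hcauchy ε hε
    refine ⟨N, fun i hi k => ?_⟩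
    have htend : Tendsto (fun j => |Fhat (u i) k - Fhat (u j) k| ^ (p k / M)) atTop
        (𝓝 (|Fhat (u i) k - y k| ^ (p k / M))) := by
      have h1 : Tendsto (fun j => Fhat (u i) k - Fhat (u j) k) atTop (𝓝 (Fhat (u i) k - y k)) :=
        tendsto_const_nhds.sub (hy k)
      exact (Real.continuousAt_rpow_const _ (p k / M) (Or.inr (hpM k).le)).tendsto.comp h1.abs
    refine le_of_tendsto htend (eventually_atTop.2 ⟨N, fun j hj => ?_⟩)
    exact (hpt i j k).trans (hN i hi j hj).le
  refine ⟨xseq y, ?_, ?_⟩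
  · -- membership in S
    rw [hS]
    show Tendsto (fun n => |Fhat (xseq y) n| ^ p n) atTop (𝓝 0)
    simp only [Fhat_xseq]
    rw [Metric.tendsto_atTop]
    intro ε hε
    have hε₁pos : 0 < min ε 1 := lt_min hε one_pos
    set δ := (min ε 1 / 2) ^ (1/M) / 2 with hδ
    have hδpos : 0 < δ := by positivity
    obtain ⟨N, hN⟩ := stepD δ hδpos
    have hev : ∀ᶠ k in atTop, |Fhat (u N) k| ^ (p k / M) < δ :=
      (stepA N).eventually_lt_const hδpos
    obtain ⟨K, hK⟩ := eventually_atTop.1 hev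
    refine ⟨K, fun k hk => ?_⟩
    have hNk := hN N le_rfl k
    have hyk : |y k| ^ (p k / M) ≤ 2 * δ := by
      have habs : |y k| ≤ |y k - Fhat (u N) k| + |Fhat (u N) k| := by
        calc |y k| = |(y k - Fhat (u N) k) + Fhat (u N) k| := congrArg abs (by ring)
          _ ≤ _ := abs_add_le _ _
      calc |y k| ^ (p k / M)
          ≤ (|y k - Fhat (u N) k| + |Fhat (u N) k|) ^ (p k / M) :=
            Real.rpow_le_rpow (abs_nonneg _) habs (hpM k).le
        _ ≤ |y k - Fhat (u N) k| ^ (p k / M) + |Fhat (u N) k| ^ (p k / M) :=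
            real_rpow_add_le (abs_nonneg _) (abs_nonneg _) (hpM k).le (hpM1 k)
        _ ≤ δ + δ := add_le_add (by rw [abs_sub_comm]; exact hNk) (hK k hk).le
        _ = 2 * δ := by ring
    have h2δ : 2 * δ = (min ε 1 / 2) ^ (1/M) := by rw [hδ]; ring
    have key : |y k| ^ p k ≤ min ε 1 / 2 := by
      have e1 : |y k| ^ p k = (|y k| ^ (p k / M)) ^ M := by
        rw [← Real.rpow_mul (abs_nonneg _), div_mul_cancel₀ _ hMpos.ne']
      rw [e1]
      calc (|y k| ^ (p k / M)) ^ M ≤ (2*δ) ^ M :=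
          Real.rpow_le_rpow (Real.rpow_nonneg (abs_nonneg _) _) hyk hMpos.le
        _ = min ε 1 / 2 := by
          rw [h2δ, ← Real.rpow_mul (by positivity), one_div_mul_cancel hMpos.ne', Real.rpow_one]
    have hmin : min ε 1 ≤ ε := min_le_left _ _
    calc dist (|y k| ^ p k) 0 = |y k| ^ p k := by
          rw [Real.dist_eq, sub_zero, abs_of_nonneg (Real.rpow_nonneg (abs_nonneg _) _)]
      _ ≤ min ε 1 / 2 := key
      _ < ε := by linarith
  · -- convergence in g
    rw [Metric.tendsto_atTop]
    intro ε hε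
    obtain ⟨N, hN⟩ := stepD (ε/2) (by positivity)
    refine ⟨N, fun i hi => ?_⟩
    have hle : g (u i - xseq y) ≤ ε/2 := by
      rw [hg]
      apply ciSup_le
      intro k
      rw [Fhat_sub, Fhat_xseq]
      exact hN i hi k
    have hnn : 0 ≤ g (u i - xseq y) := by
      rw [hg]; exact Real.iSup_nonneg fun k => Real.rpow_nonneg (abs_nonneg _) _
    rw [Real.dist_eq, sub_zero, abs_of_nonneg hnn]
    linarith
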